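/- Let A and B be Frobenius monoids in a monoidal dagger category and let f : A → B be a monoid homomorphism that is also a comonoid homomorphism with respect to the comonoid structures (m_A†, u_A†) and (m_B†, u_B†). Then f is an isomorphism. -/

import Mathlib

open CategoryTheory Category MonoidalCategory

universe v u

/-- A dagger structure on a category: a contravariant, identity-on-objects,
involutive operation on morphisms. -/
class DaggerStruct (C : Type u) [Category.{v} C] where
  dag : ∀ {X Y : C}, (X ⟶ Y) → (Y ⟶ X)
  dag_dag : ∀ {X Y : C} (f : X ⟶ Y), dag (dag f) = f
  dag_id : ∀ X : C, dag (𝟙 X) = 𝟙 X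
  dag_comp : ∀ {X Y Z : C} (f : X ⟶ Y) (g : Y ⟶ Z), dag (f ≫ g) = dag g ≫ dag f

notation:max f "†" => DaggerStruct.dag f

/-- A monoidal dagger category: the dagger cooperates with the monoidal structure. -/
class MonoidalDagger (C : Type u) [Category.{v} C] [MonoidalCategory C] extends
    DaggerStruct C where
  dag_tensor : ∀ {X₁ Y₁ X₂ Y₂ : C} (f : X₁ ⟶ Y₁) (g : X₂ ⟶ Y₂), (f ⊗ₘ g)† = f† ⊗ₘ g†
  assoc_unitary : ∀ X Y Z : C, ((α_ X Y Z).hom)† = (α_ X Y Z).inv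
  lunitor_unitary : ∀ X : C, ((λ_ X).hom)† = (λ_ X).inv
  runitor_unitary : ∀ X : C, ((ρ_ X).hom)† = (ρ_ X).inv

/-- A symmetric monoidal dagger category: additionally the symmetries are unitary. -/
class SymmetricDagger (C : Type u) [Category.{v} C] [MonoidalCategory C]
    [SymmetricCategory C] extends MonoidalDagger C where
  braiding_unitary : ∀ X Y : C, ((β_ X Y).hom)† = (β_ X Y).inv

/-- A monoid object, given by explicit data. -/
structure IsMonoidObj {C : Type u} [Category.{v} C] [MonoidalCategory C] (A : C)
    (m : A ⊗ A ⟶ A) (u : 𝟙_ C ⟶ A) : Prop where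
  mul_assoc : (m ⊗ₘ 𝟙 A) ≫ m = (α_ A A A).hom ≫ (𝟙 A ⊗ₘ m) ≫ m
  one_mul : (u ⊗ₘ 𝟙 A) ≫ m = (λ_ A).hom
  mul_one : (𝟙 A ⊗ₘ u) ≫ m = (ρ_ A).hom

/-- A Frobenius monoid in a monoidal dagger category. -/
structure IsFrobeniusMonoid {C : Type u} [Category.{v} C] [MonoidalCategory C]
    [MonoidalDagger C] (A : C) (m : A ⊗ A ⟶ A) (u : 𝟙_ C ⟶ A) extends
    IsMonoidObj A m u : Prop where
  frobenius : (m† ⊗ₘ 𝟙 A) ≫ (α_ A A A).hom ≫ (𝟙 A ⊗ₘ m) =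
    (𝟙 A ⊗ₘ m†) ≫ (α_ A A A).inv ≫ (m ⊗ₘ 𝟙 A)

/-- A Frobenius monad on a dagger category. -/
structure IsFrobeniusMonad {C : Type u} [Category.{v} C] [DaggerStruct C]
    (T : Monad C) : Prop where
  map_dag : ∀ {X Y : C} (f : X ⟶ Y), T.map (f†) = (T.map f)†
  frobenius : ∀ A : C,
    ((T.μ.app (T.obj A))†) ≫ T.map (T.μ.app A) =
      T.map ((T.μ.app A)†) ≫ T.μ.app (T.obj A)

/-- The snake equation for the self-duality induced by a Frobenius monoid. -/
theorem frob_snake {C : Type u} [Category.{v} C] [MonoidalCategory C]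
    [MonoidalDagger C] {A : C} {m : A ⊗ A ⟶ A} {u : 𝟙_ C ⟶ A}
    (h : IsFrobeniusMonoid A m u) :
    (λ_ A).inv ≫ ((u ≫ m†) ⊗ₘ 𝟙 A) ≫ (α_ A A A).hom ≫ (𝟙 A ⊗ₘ (m ≫ u†)) ≫ (ρ_ A).hom
      = 𝟙 A := by
  have hρ : m† ≫ (𝟙 A ⊗ₘ (u†)) = (ρ_ A).inv := by
    have := congrArg DaggerStruct.dag h.mul_one
    rw [DaggerStruct.dag_comp, MonoidalDagger.dag_tensor, DaggerStruct.dag_id,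
      MonoidalDagger.runitor_unitary] at this
    exact this
  rw [comp_tensor_id, id_tensor_comp]
  simp only [Category.assoc]
  rw [reassoc_of% h.frobenius]
  rw [tensor_id_comp_id_tensor_assoc, ← id_tensor_comp_tensor_id]
  simp only [Category.assoc]
  rw [id_tensorHom, ← leftUnitor_inv_naturality_assoc]
  rw [← id_tensorHom_id, associator_inv_naturality_assoc, ← comp_tensor_id_assoc, h.one_mul]
  rw [tensorHom_id]
  slice_lhs 3 4 => rw [← leftUnitor_tensor_hom]
  simp only [Category.assoc, Iso.inv_hom_id_assoc]
  rw [reassoc_of% hρ, Iso.inv_hom_id]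

/-- STATEMENT 16: a monoid homomorphism between Frobenius monoids in a monoidal dagger
category that is also a comonoid homomorphism (for the dagger comonoid structures) is an
isomorphism. -/
theorem frobenius_mon_comon_hom_iso {C : Type u} [Category.{v} C] [MonoidalCategory C]
    [MonoidalDagger C] {A B : C} {mA : A ⊗ A ⟶ A} {uA : 𝟙_ C ⟶ A} {mB : B ⊗ B ⟶ B}
    {uB : 𝟙_ C ⟶ B} (hA : IsFrobeniusMonoid A mA uA) (hB : IsFrobeniusMonoid B mB uB)
    (f : A ⟶ B)
    (hm : mA ≫ f = (f ⊗ₘ f) ≫ mB) (hu : uA ≫ f = uB)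
    (hcm : f ≫ (mB†) = (mA†) ≫ (f ⊗ₘ f)) (hcu : f ≫ (uB†) = uA†) :
    IsIso f := by
  have hη : (uA ≫ mA†) ≫ (f ⊗ₘ f) = uB ≫ mB† := by
    rw [Category.assoc, ← hcm, ← Category.assoc, hu]
  have hε : (f ⊗ₘ f) ≫ mB ≫ uB† = mA ≫ (uA†) := by
    rw [← Category.assoc, ← hm, Category.assoc, hcu]
  refine ⟨⟨(λ_ B).inv ≫ ((uA ≫ mA†) ⊗ₘ 𝟙 B) ≫ (α_ A A B).hom ≫
    (𝟙 A ⊗ₘ ((f ⊗ₘ 𝟙 B) ≫ mB ≫ uB†)) ≫ (ρ_ A).hom, ?_, ?_⟩⟩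
  · -- f ≫ g = 𝟙 A
    rw [leftUnitor_inv_naturality_assoc, ← id_tensorHom,
      id_tensor_comp_tensor_id_assoc, ← tensor_id_comp_id_tensor]
    simp only [Category.assoc]
    rw [← id_tensorHom_id, associator_naturality_assoc, ← id_tensor_comp_assoc,
      id_tensor_comp_tensor_id_assoc, hε]
    exact frob_snake hA
  · -- g ≫ f = 𝟙 B
    simp only [Category.assoc]
    rw [← rightUnitor_naturality, ← tensorHom_id, id_tensor_comp_tensor_id_assoc,
      ← tensor_id_comp_id_tensor ((f ⊗ₘ 𝟙 B) ≫ mB ≫ uB†) f]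
    simp only [Category.assoc]
    rw [show (𝟙 (A ⊗ B) : A ⊗ B ⟶ A ⊗ B) = 𝟙 A ⊗ₘ 𝟙 B from (id_tensorHom_id A B).symm,
      ← associator_naturality_assoc f (𝟙 A) (𝟙 B), id_tensor_comp]
    simp only [Category.assoc]
    rw [← associator_naturality_assoc (𝟙 B) f (𝟙 B),
      ← comp_tensor_id_assoc, ← comp_tensor_id_assoc]
    simp only [Category.assoc, tensor_id_comp_id_tensor]
    rw [show uA ≫ mA† ≫ (f ⊗ₘ f) = uB ≫ mB† by rw [← Category.assoc]; exact hη]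
    exact frob_snake hB
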